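/- Every word v ∈ W^(◦,k+1) admits a unique decomposition v = a(w¹)a(w²)⋯a(wⁿ) where each wⁱ ∈ W^(◦,k) and a(w) := ◦ w •, such that within each factor a(wⁱ) all proper nonempty prefixes have strictly positive color balance. -/

import Mathlib

/-- Words on the two-letter alphabet {◦,•}: `true` = ◦ (white), `false` = • (black). -/
abbrev Word := List Bool

/-- Color balance: number of white letters minus number of black letters. -/
def cb (w : Word) : ℤ := (w.count true : ℤ) - (w.count false : ℤ)

/-- Conjugation: reverse the word and swap the colors. -/
def wconj (w : Word) : Word := (w.map (fun b => !b)).reverse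

/-- Elementary cancellation: deletion of an adjacent pair ◦• or •◦. -/
def ECancel (w w' : Word) : Prop :=
  ∃ (u v : Word) (x : Bool), w = u ++ x :: (!x) :: v ∧ w' = u ++ v

/-- Concatenation of a list of words. -/
def cat (L : List Word) : Word := L.foldr (· ++ ·) []

/-- `W^(k)`: words whose color balance is divisible by `k`. -/
def Wmod (k : ℕ) : Set Word := {w | (k : ℤ) ∣ cb w}

/-- `W^(◦,k)`: words of balance 0 all of whose prefix balances lie in `[0,k]`. -/
def Wcirc (k : ℕ) : Set Word :=
  {w | cb w = 0 ∧ ∀ l : ℕ, 0 ≤ cb (w.take l) ∧ cb (w.take l) ≤ (k : ℤ)}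

/-- `W^(•,k)`: words of balance 0 all of whose prefix balances lie in `[-k,0]`. -/
def Wbul (k : ℕ) : Set Word :=
  {w | cb w = 0 ∧ ∀ l : ℕ, -(k : ℤ) ≤ cb (w.take l) ∧ cb (w.take l) ≤ 0}

/-- `W^(◦,∞)`: words of balance 0 with all prefix balances nonnegative. -/
def WcircInf : Set Word := {w | cb w = 0 ∧ ∀ l : ℕ, 0 ≤ cb (w.take l)}

/-- `W^(•,∞)`: words of balance 0 with all prefix balances nonpositive. -/
def WbulInf : Set Word := {w | cb w = 0 ∧ ∀ l : ℕ, cb (w.take l) ≤ 0}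

/-- `a(w) = ◦ w •`. -/
def aw (w : Word) : Word := true :: (w ++ [false])

lemma cb_nil : cb [] = 0 := rfl
lemma cb_append (u v : Word) : cb (u ++ v) = cb u + cb v := by simp [cb]; ring
lemma cb_single (b : Bool) : cb [b] = if b then 1 else -1 := by cases b <;> rfl
lemma cb_cons (b : Bool) (w : Word) : cb (b :: w) = (if b then 1 else -1) + cb w := by
  have := cb_append [b] w; simpa [cb_single] using this
lemma cb_aw (w : Word) : cb (aw w) = cb w := by
  simp [aw, cb_cons, cb_append, cb_single, cb_nil]
lemma aw_length (w : Word) : (aw w).length = w.length + 2 := by simp [aw]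
lemma cat_cons (x : Word) (L : List Word) : cat (x :: L) = x ++ cat L := rfl
lemma cb_take_succ (v : Word) (l : ℕ) (h : l < v.length) :
    cb (v.take (l+1)) = cb (v.take l) + (if v[l] then 1 else -1) := by
  rw [List.take_succ, List.getElem?_eq_getElem h, Option.toList_some, cb_append, cb_single]
lemma aw_take (w : Word) (l : ℕ) (hl : l ≤ w.length) :
    (aw w).take (l+1) = true :: w.take l := by
  simp [aw, List.take_cons, List.take_append_of_le_length hl]

lemma aw_pos (k : ℕ) (w : Word) (hw : w ∈ Wcirc k) :
    ∀ l : ℕ, 0 < l → l < (aw w).length → 0 < cb ((aw w).take l) := by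
  intro l hl0 hl
  obtain ⟨l, rfl⟩ : ∃ l', l = l' + 1 := ⟨l - 1, (Nat.succ_pred_eq_of_pos hl0).symm⟩
  rw [aw_length] at hl
  rw [aw_take w l (by omega), cb_cons]
  have := (hw.2 l).1
  simp only [if_true]
  omega

lemma head_eq (w w' : Word) (A B : Word)
    (h : aw w ++ A = aw w' ++ B)
    (hw : cb w = 0) (hw' : cb w' = 0)
    (pw : ∀ l : ℕ, 0 < l → l < (aw w).length → 0 < cb ((aw w).take l))
    (pw' : ∀ l : ℕ, 0 < l → l < (aw w').length → 0 < cb ((aw w').take l)) :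
    w = w' := by
  have key : ∀ (u u' : Word) (A B : Word), aw u ++ A = aw u' ++ B → cb u = 0 →
      (∀ l : ℕ, 0 < l → l < (aw u').length → 0 < cb ((aw u').take l)) →
      (aw u).length ≤ (aw u').length → aw u = aw u' := by
    intro u u' A B h hu pu' hle
    have htake : aw u = (aw u').take (aw u).length := by
      have h1 : (aw u ++ A).take (aw u).length = aw u :=
        List.take_append_of_le_length le_rfl |>.trans List.take_length
      rw [h, List.take_append_of_le_length hle] at h1
      exact h1.symm
    rcases lt_or_eq_of_le hle with hlt | heq
    · exfalso
      have := pu' (aw u).length (by rw [aw_length]; omega) hlt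
      rw [← htake, cb_aw, hu] at this
      exact lt_irrefl 0 this
    · rw [htake, heq, List.take_length]
  rcases le_total (aw w).length (aw w').length with hle | hle
  · have := key w w' A B h hw pw' hle
    simpa [aw] using this
  · have := key w' w B A h.symm hw' pw hle
    simpa [aw] using this.symm

lemma decomp_unique : ∀ (L L' : List Word),
    (∀ w ∈ L, cb w = 0) → (∀ w ∈ L', cb w = 0) →
    (∀ w ∈ L, ∀ l : ℕ, 0 < l → l < (aw w).length → 0 < cb ((aw w).take l)) →
    (∀ w ∈ L', ∀ l : ℕ, 0 < l → l < (aw w).length → 0 < cb ((aw w).take l)) →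
    cat (L.map aw) = cat (L'.map aw) → L = L' := by
  intro L
  induction L with
  | nil =>
    intro L' _ _ _ _ h
    cases L' with
    | nil => rfl
    | cons w t => simp [cat, aw] at h
  | cons w t ih =>
    intro L' hL hL' pL pL' h
    cases L' with
    | nil => simp [cat, aw] at h
    | cons w' t' =>
      simp only [List.map_cons, cat_cons] at h
      have hww' : w = w' := head_eq w w' _ _ h (hL w (by simp)) (hL' w' (by simp))
        (pL w (by simp)) (pL' w' (by simp))
      subst hww'
      have ht : cat (t.map aw) = cat (t'.map aw) := List.append_cancel_left h
      rw [ih t' (fun x hx => hL x (by simp [hx])) (fun x hx => hL' x (by simp [hx]))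
        (fun x hx => pL x (by simp [hx])) (fun x hx => pL' x (by simp [hx])) ht]

lemma decomp_exists (k : ℕ) : ∀ n (v : Word), v.length ≤ n → v ∈ Wcirc (k+1) →
    ∃ L : List Word, (∀ w ∈ L, w ∈ Wcirc k) ∧ v = cat (L.map aw) := by
  intro n
  induction n with
  | zero =>
    intro v hlen _
    have : v = [] := List.length_eq_zero_iff.mp (Nat.le_zero.mp hlen)
    exact ⟨[], by simp [this, cat]⟩
  | succ n ih =>
    intro v hlen hv
    rcases eq_or_ne v [] with rfl | hne
    · exact ⟨[], by simp [cat]⟩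
    have hvlen : 0 < v.length := List.length_pos_iff.mpr hne
    obtain ⟨hcb0, hpre⟩ := hv
    have hP : ∃ m, 0 < m ∧ cb (v.take m) = 0 :=
      ⟨v.length, hvlen, by simpa using hcb0⟩
    classical
    obtain ⟨m, hm0, hmcb, hmin, hml⟩ :
        ∃ m, 0 < m ∧ cb (v.take m) = 0 ∧
          (∀ l, 0 < l → l < m → cb (v.take l) ≠ 0) ∧ m ≤ v.length := by
      refine ⟨Nat.find hP, (Nat.find_spec hP).1, (Nat.find_spec hP).2, ?_, ?_⟩
      · intro l hl0 hlm hc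
        exact Nat.find_min hP hlm ⟨hl0, hc⟩
      · exact Nat.find_min' hP ⟨hvlen, by simpa using hcb0⟩
    have hposl : ∀ l, 0 < l → l < m → 0 < cb (v.take l) := fun l h0 hm =>
      lt_of_le_of_ne (hpre l).1 (Ne.symm (hmin l h0 hm))
    -- structure of t := v.take m
    obtain ⟨b, s, hts⟩ : ∃ b s, v.take m = b :: s := by
      cases h : v.take m with
      | nil =>
        exfalso
        have := congrArg List.length h
        rw [List.length_take, List.length_nil] at this
        omega
      | cons b s => exact ⟨b, s, rfl⟩
    have hslen : s.length = m - 1 := by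
      have := congrArg List.length hts
      rw [List.length_take, List.length_cons] at this
      omega
    have htake1 : v.take 1 = [b] := by
      have h1 : (v.take m).take 1 = v.take 1 := by
        rw [List.take_take, min_eq_left (by omega)]
      rw [← h1, hts]
      rfl
    have hb : b = true := by
      have h0 := (hpre 1).1
      cases b
      · rw [htake1] at h0
        rw [cb_single] at h0
        simp at h0
      · rfl
    have hm2 : 2 ≤ m := by
      by_contra hcon
      have hm1 : m = 1 := by omega
      rw [hm1, htake1, cb_single, hb] at hmcb
      simp at hmcb
    have hsne : s ≠ [] := by
      intro hc; rw [hc] at hslen; simp at hslen; omega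
    obtain ⟨w, x, hsx⟩ : ∃ w x, s = w ++ [x] :=
      ⟨s.dropLast, s.getLast hsne, (List.dropLast_append_getLast hsne).symm⟩
    have hwlen : w.length = m - 2 := by
      have := congrArg List.length hsx
      rw [List.length_append, List.length_singleton] at this
      omega
    have htakem1 : v.take (m-1) = b :: w := by
      have h1 : (v.take m).take (m-1) = v.take (m-1) := by
        rw [List.take_take, min_eq_left (by omega)]
      rw [← h1, hts, hsx, show m - 1 = (m-2) + 1 by omega, List.take_succ_cons,
        ← hwlen, List.take_append_of_le_length le_rfl, List.take_length]
    have hcbm1 : 0 < cb (v.take (m-1)) := hposl (m-1) (by omega) (by omega)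
    rw [htakem1] at hcbm1
    have hx : x = false := by
      have h1 : cb (v.take m) = cb (b :: w) + cb [x] := by
        rw [hts, hsx, cb_cons, cb_cons, cb_append, cb_single]
        ring
      rw [hmcb] at h1
      cases x
      · rfl
      · rw [cb_single] at h1; simp at h1; omega
    have htaw : v.take m = aw w := by
      rw [hts, hb, hsx, hx]
      rfl
    have hvsplit : v = v.take m ++ v.drop m := (List.take_append_drop m v).symm
    -- prefix balances of w
    have hwtake : ∀ l, l ≤ w.length → cb (w.take l) = cb (v.take (l+1)) - 1 := by
      intro l hl
      have h1 : v.take (l+1) = (v.take m).take (l+1) := by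
        rw [List.take_take, min_eq_left (by omega)]
      have h2 : (v.take m).take (l+1) = true :: w.take l := by
        rw [htaw]; exact aw_take w l hl
      rw [h1, h2, cb_cons]; simp
    have hwcb : cb w = 0 := by
      have : cb (v.take m) = cb w := by rw [htaw, cb_aw]
      rw [← this, hmcb]
    have hwmem : w ∈ Wcirc k := by
      refine ⟨hwcb, ?_⟩
      intro l
      rcases le_or_gt l w.length with hl | hl
      · rw [hwtake l hl]
        have hub := (hpre (l+1)).2
        have hlb : 0 < cb (v.take (l+1)) := hposl (l+1) (by omega) (by omega)
        push_cast at hub ⊢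
        omega
      · rw [List.take_of_length_le (by omega), hwcb]
        exact ⟨le_refl 0, by positivity⟩
    -- rest
    have hrmem : v.drop m ∈ Wcirc (k+1) := by
      constructor
      · have := cb_append (v.take m) (v.drop m)
        rw [← hvsplit, hcb0, hmcb] at this
        omega
      · intro l
        have h1 : v.take (m + l) = v.take m ++ (v.drop m).take l := List.take_add ..
        have h2 : cb ((v.drop m).take l) = cb (v.take (m+l)) := by
          rw [h1, cb_append, hmcb]; ring
        rw [h2]; exact hpre (m+l)
    have hrlen : (v.drop m).length ≤ n := by
      rw [List.length_drop]; omega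
    obtain ⟨L, hL, hLcat⟩ := ih (v.drop m) hrlen hrmem
    refine ⟨w :: L, ?_, ?_⟩
    · intro y hy
      rcases List.mem_cons.mp hy with rfl | hy
      · exact hwmem
      · exact hL y hy
    · simp only [List.map_cons, cat_cons]
      rw [← hLcat, ← htaw, ← hvsplit]


/-- every `v ∈ W^(◦,k+1)` has a unique decomposition
`v = a(w¹)⋯a(wⁿ)` with each `wⁱ ∈ W^(◦,k)` and all proper nonempty prefixes of
each factor `a(wⁱ)` of strictly positive balance. -/
theorem stmt10 (k : ℕ) (v : Word) (hv : v ∈ Wcirc (k+1)) :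
    ∃! L : List Word,
      (∀ w ∈ L, w ∈ Wcirc k) ∧ v = cat (L.map aw) ∧
      ∀ w ∈ L, ∀ l : ℕ, 0 < l → l < (aw w).length → 0 < cb ((aw w).take l) := by
  obtain ⟨L, hL, hcat⟩ := decomp_exists k v.length v le_rfl hv
  refine ⟨L, ⟨hL, hcat, fun w hw => aw_pos k w (hL w hw)⟩, ?_⟩
  rintro L' ⟨hL', hcat', hpos'⟩
  exact decomp_unique L' L (fun w hw => (hL' w hw).1) (fun w hw => (hL w hw).1)
    hpos' (fun w hw => aw_pos k w (hL w hw)) (hcat'.symm.trans hcat)
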